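/- Let g : ℝ₊ → ℝ₊ be continuous with g(0) = 0 and G : C(ℝ₊; ℝ^d) → ℝ₊ bounded on compact sets. Let X^n, Y^n (n ≥ 1) be random variables valued in C(ℝ₊; ℝ^d). If {Y^n : n ≥ 1} is tight, |X^n_0| ≤ G(Y^n) a.s., and the modulus of continuity on each [0,T] satisfies m_{X^n}(ε; [0,T]) ≤ G(Y^n) g(m_{Y^n}(ε; [0,T])) a.s. for all ε, T > 0 and n, then {X^n : n ≥ 1} is tight in C(ℝ₊; ℝ^d). -/

import Mathlib

open MeasureTheory Set
open scoped NNReal ENNReal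

/-- The modulus of continuity of a continuous path on `[0,T]`. -/
noncomputable def modC {d : ℕ} (f : C(ℝ≥0, EuclideanSpace ℝ (Fin d)))
    (ε T : ℝ≥0) : ℝ :=
  sSup {r : ℝ | ∃ u v : ℝ≥0, u ≤ T ∧ v ≤ T ∧ dist u v ≤ (ε : ℝ) ∧ r = ‖f u - f v‖}

section aux

open scoped Uniformity

variable {d : ℕ}

lemma modC_zero_mem {d : ℕ} (f : C(ℝ≥0, EuclideanSpace ℝ (Fin d))) (ε T : ℝ≥0) :
    (0:ℝ) ∈ {r : ℝ | ∃ u v : ℝ≥0, u ≤ T ∧ v ≤ T ∧ dist u v ≤ (ε : ℝ) ∧ r = ‖f u - f v‖} :=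
  ⟨0, 0, zero_le, zero_le, by simp, by simp⟩

lemma modC_bddAbove (f : C(ℝ≥0, EuclideanSpace ℝ (Fin d))) (ε T : ℝ≥0) :
    BddAbove {r : ℝ | ∃ u v : ℝ≥0, u ≤ T ∧ v ≤ T ∧ dist u v ≤ (ε : ℝ) ∧ r = ‖f u - f v‖} := by
  obtain ⟨C, hC⟩ := (isCompact_Icc (a := (0:ℝ≥0)) (b := T)).exists_bound_of_continuousOn
    f.continuous.continuousOn
  refine ⟨2*C, ?_⟩
  rintro r ⟨u, v, hu, hv, -, rfl⟩
  have h1 := hC u ⟨zero_le, hu⟩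
  have h2 := hC v ⟨zero_le, hv⟩
  calc ‖f u - f v‖ ≤ ‖f u‖ + ‖f v‖ := norm_sub_le _ _
  _ ≤ 2*C := by linarith

lemma modC_nonneg (f : C(ℝ≥0, EuclideanSpace ℝ (Fin d))) (ε T : ℝ≥0) :
    0 ≤ modC f ε T :=
  le_csSup (modC_bddAbove f ε T) (modC_zero_mem f ε T)

lemma le_modC (f : C(ℝ≥0, EuclideanSpace ℝ (Fin d))) {u v ε T : ℝ≥0}
    (hu : u ≤ T) (hv : v ≤ T) (hd : dist u v ≤ (ε : ℝ)) :
    ‖f u - f v‖ ≤ modC f ε T :=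
  le_csSup (modC_bddAbove f ε T) ⟨u, v, hu, hv, hd, rfl⟩

lemma modC_le (f : C(ℝ≥0, EuclideanSpace ℝ (Fin d))) {ε T : ℝ≥0} {c : ℝ}
    (h : ∀ u v : ℝ≥0, u ≤ T → v ≤ T → dist u v ≤ (ε : ℝ) → ‖f u - f v‖ ≤ c) :
    modC f ε T ≤ c := by
  refine Real.sSup_le ?_ ?_
  · rintro r ⟨u, v, hu, hv, hd, rfl⟩
    exact h u v hu hv hd
  · have := h 0 0 (zero_le) (zero_le) (by simp)
    simpa using this

/-- Uniform equicontinuity on `[0,m]` of a compact family. -/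
lemma equi_of_isCompact {KY : Set C(ℝ≥0, EuclideanSpace ℝ (Fin d))} (hK : IsCompact KY)
    (m : ℝ≥0) {ε : ℝ} (hε : 0 < ε) :
    ∃ δ : ℝ≥0, 0 < δ ∧ ∀ f ∈ KY, ∀ u v : ℝ≥0, u ≤ m → v ≤ m → dist u v ≤ (δ : ℝ) →
      ‖f u - f v‖ ≤ ε := by
  rcases KY.eq_empty_or_nonempty with hKe | hKne
  · exact ⟨1, one_pos, by simp [hKe]⟩
  have hV : {fg : C(ℝ≥0, EuclideanSpace ℝ (Fin d)) × C(ℝ≥0, EuclideanSpace ℝ (Fin d)) |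
      ∀ x ∈ Icc (0:ℝ≥0) m, dist (fg.1 x) (fg.2 x) < ε/3} ∈ 𝓤 C(ℝ≥0, EuclideanSpace ℝ (Fin d)) := by
    refine ContinuousMap.hasBasis_compactConvergenceUniformity.mem_of_mem
      (i := (Icc (0:ℝ≥0) m, {p : EuclideanSpace ℝ (Fin d) × EuclideanSpace ℝ (Fin d) |
        dist p.1 p.2 < ε/3})) ⟨isCompact_Icc, Metric.dist_mem_uniformity (by positivity)⟩
  obtain ⟨t, htfin, hcover⟩ := hK.totallyBounded _ hV
  have huc : ∀ y : C(ℝ≥0, EuclideanSpace ℝ (Fin d)), ∃ dy : ℝ, 0 < dy ∧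
      ∀ u ∈ Icc (0:ℝ≥0) m, ∀ v ∈ Icc (0:ℝ≥0) m, dist u v < dy → dist (y u) (y v) < ε/3 := by
    intro y
    have := (isCompact_Icc (a := (0:ℝ≥0)) (b := m)).uniformContinuousOn_of_continuous
      y.continuous.continuousOn
    obtain ⟨dy, hdy, h⟩ := Metric.uniformContinuousOn_iff.mp this (ε/3) (by positivity)
    exact ⟨dy, hdy, h⟩
  choose D hDpos hD using huc
  have htne : t.Nonempty := by
    rcases hKne with ⟨f, hf⟩
    rcases mem_iUnion₂.mp (hcover hf) with ⟨y, hy, -⟩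
    exact ⟨y, hy⟩
  set Ft := htfin.toFinset
  have hFne : Ft.Nonempty := by simpa [Ft] using htne
  set dmin : ℝ := Ft.inf' hFne D
  have hdminpos : 0 < dmin := by
    rw [Finset.lt_inf'_iff]
    intro y _
    exact hDpos y
  refine ⟨(dmin/2).toNNReal, by simp [Real.toNNReal_pos]; positivity, ?_⟩
  intro f hf u v hu hv hd
  rcases mem_iUnion₂.mp (hcover hf) with ⟨y, hy, hfy⟩
  have hfy' : ∀ x ∈ Icc (0:ℝ≥0) m, dist (f x) (y x) < ε/3 := hfy
  have hyF : y ∈ Ft := by simpa [Ft] using hy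
  have hdy : dist u v < D y := by
    have h1 : (dmin/2).toNNReal = (dmin/2 : ℝ) := Real.coe_toNNReal _ (by positivity)
    have h2 : dmin ≤ D y := Finset.inf'_le _ hyF
    calc dist u v ≤ ((dmin/2).toNNReal : ℝ) := hd
    _ = dmin/2 := h1
    _ < D y := by linarith
  have humem : u ∈ Icc (0:ℝ≥0) m := ⟨zero_le, hu⟩
  have hvmem : v ∈ Icc (0:ℝ≥0) m := ⟨zero_le, hv⟩
  have key : dist (f u) (f v) < ε := by
    calc dist (f u) (f v) ≤ dist (f u) (y u) + dist (y u) (y v) + dist (y v) (f v) :=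
      dist_triangle4 _ _ _ _
    _ < ε := by
        have e1 := hfy' u humem
        have e2 := hD y u humem v hvmem hdy
        have e3 := hfy' v hvmem
        rw [dist_comm (y v) (f v)]
        linarith
  rw [← dist_eq_norm]
  exact key.le

/-- Chaining bound. -/
lemma chain_bound (F : ℝ≥0 → EuclideanSpace ℝ (Fin d)) (m dd : ℝ≥0) (c : ℝ)
    (h : ∀ u v : ℝ≥0, u ≤ m → v ≤ m → dist u v ≤ (dd : ℝ) → ‖F u - F v‖ ≤ c) :
    ∀ N : ℕ, ∀ x : ℝ≥0, x ≤ m → x ≤ N * dd → ‖F x - F 0‖ ≤ N * c := by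
  intro N
  induction N with
  | zero =>
    intro x _ hx
    simp only [Nat.cast_zero, zero_mul] at hx ⊢
    rw [le_zero_iff] at hx
    simp [hx]
  | succ N ih =>
    intro x hxm hx
    set y : ℝ≥0 := x - dd with hy
    have hyx : y ≤ x := tsub_le_self
    have hym : y ≤ m := hyx.trans hxm
    have hyN : y ≤ N * dd := by
      rw [hy, tsub_le_iff_right]
      calc x ≤ ((N+1 : ℕ) : ℝ≥0) * dd := hx
      _ = N * dd + dd := by push_cast; ring
    have hdxy : dist x y ≤ (dd : ℝ) := by
      rw [NNReal.dist_eq, abs_of_nonneg (by exact_mod_cast sub_nonneg.mpr (NNReal.coe_le_coe.mpr hyx))]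
      have : x ≤ y + dd := le_tsub_add
      have := NNReal.coe_le_coe.mpr this
      push_cast at this
      linarith
    have h1 : ‖F x - F y‖ ≤ c := h x y hxm hym hdxy
    have h2 : ‖F y - F 0‖ ≤ N * c := ih y hym hyN
    calc ‖F x - F 0‖ = ‖(F x - F y) + (F y - F 0)‖ := by rw [sub_add_sub_cancel]
    _ ≤ ‖F x - F y‖ + ‖F y - F 0‖ := norm_add_le _ _
    _ ≤ c + N * c := add_le_add h1 h2
    _ = (N+1 : ℕ) * c := by push_cast; ring

end aux


/-- Comparison tightness lemma (ch1-p2-tight): if `{Y^n}` is tight,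
`|X^n_0| ≤ G(Y^n)` a.s. and
`m_{X^n}(ε;[0,T]) ≤ G(Y^n) g(m_{Y^n}(ε;[0,T]))` a.s., with `g` continuous,
`g(0)=0` and `G` bounded on compacts, then `{X^n}` is tight. -/
theorem stmt_13 {d : ℕ} {Ω : Type*} [MeasurableSpace Ω]
    (P : Measure Ω) [IsProbabilityMeasure P]
    (g : ℝ → ℝ) (hgc : Continuous g) (hg0 : g 0 = 0) (hgnn : ∀ r, 0 ≤ r → 0 ≤ g r)
    (G : C(ℝ≥0, EuclideanSpace ℝ (Fin d)) → ℝ) (hGnn : ∀ f, 0 ≤ G f)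
    (hGb : ∀ K : Set C(ℝ≥0, EuclideanSpace ℝ (Fin d)), IsCompact K →
      ∃ M : ℝ, ∀ f ∈ K, G f ≤ M)
    (X Y : ℕ → Ω → C(ℝ≥0, EuclideanSpace ℝ (Fin d)))
    (hYtight : ∀ η : ℝ≥0∞, 0 < η →
      ∃ K : Set C(ℝ≥0, EuclideanSpace ℝ (Fin d)), IsCompact K ∧
        ∀ n : ℕ, 1 ≤ n → P {ω | Y n ω ∉ K} ≤ η)
    (h0 : ∀ n : ℕ, 1 ≤ n → ∀ᵐ ω ∂P, ‖X n ω 0‖ ≤ G (Y n ω))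
    (hm : ∀ ε T : ℝ≥0, 0 < ε → 0 < T → ∀ n : ℕ, 1 ≤ n →
      ∀ᵐ ω ∂P, modC (X n ω) ε T ≤ G (Y n ω) * g (modC (Y n ω) ε T)) :
    ∀ η : ℝ≥0∞, 0 < η →
      ∃ K : Set C(ℝ≥0, EuclideanSpace ℝ (Fin d)), IsCompact K ∧
        ∀ n : ℕ, 1 ≤ n → P {ω | X n ω ∉ K} ≤ η := by
  classical
  intro η hη
  obtain ⟨KY, hKYc, hKYm⟩ := hYtight η hη
  obtain ⟨M₀, hM₀⟩ := hGb KY hKYc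
  set M : ℝ := max M₀ 0 with hM
  have hMnn : 0 ≤ M := le_max_right _ _
  have hGM : ∀ f ∈ KY, G f ≤ M := fun f hf => (hM₀ f hf).trans (le_max_left _ _)
  -- choose the moduli δ m j
  have hδex : ∀ m j : ℕ, ∃ δ : ℝ≥0, 0 < δ ∧ ∀ f ∈ KY,
      g (modC f δ (m : ℝ≥0)) ≤ 1/((j:ℝ)+1) := by
    intro m j
    have hj : (0:ℝ) < 1/((j:ℝ)+1) := by positivity
    obtain ⟨ρ, hρ, hgρ⟩ := Metric.continuousAt_iff.mp (hgc.continuousAt (x := 0)) _ hj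
    obtain ⟨δ, hδpos, hδ⟩ := equi_of_isCompact hKYc (m:ℝ≥0) (by positivity : (0:ℝ) < ρ/2)
    refine ⟨δ, hδpos, fun f hf => ?_⟩
    have h1 : modC f δ m ≤ ρ/2 := modC_le f (fun u v hu hv hd => hδ f hf u v hu hv hd)
    have h0' : 0 ≤ modC f δ m := modC_nonneg f _ _
    have hlt : dist (modC f δ m) 0 < ρ := by
      rw [Real.dist_eq, sub_zero, abs_of_nonneg h0']; linarith
    have := hgρ hlt
    rw [hg0, Real.dist_eq, sub_zero] at this
    calc g (modC f δ m) ≤ |g (modC f δ m)| := le_abs_self _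
    _ ≤ 1/((j:ℝ)+1) := this.le
  choose δ hδpos hδg using hδex
  -- the compact set for X
  set KX : Set C(ℝ≥0, EuclideanSpace ℝ (Fin d)) :=
    {f | ‖f 0‖ ≤ M ∧ ∀ m j : ℕ, ∀ u v : ℝ≥0, u ≤ (m:ℝ≥0) → v ≤ (m:ℝ≥0) →
       dist u v ≤ ((δ m j : ℝ≥0) : ℝ) → ‖f u - f v‖ ≤ M/((j:ℝ)+1)} with hKXdef
  set A : Set (ℝ≥0 → EuclideanSpace ℝ (Fin d)) :=
    {F | ‖F 0‖ ≤ M ∧ ∀ m j : ℕ, ∀ u v : ℝ≥0, u ≤ (m:ℝ≥0) → v ≤ (m:ℝ≥0) →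
       dist u v ≤ ((δ m j : ℝ≥0) : ℝ) → ‖F u - F v‖ ≤ M/((j:ℝ)+1)} with hAdef
  -- the uniform local estimate
  have hest : ∀ (x : ℝ≥0) (ε : ℝ), 0 < ε → ∃ δ' : ℝ, 0 < δ' ∧
      ∀ F ∈ A, ∀ y : ℝ≥0, dist y x < δ' → ‖F y - F x‖ < ε := by
    intro x ε hε
    obtain ⟨j, hj⟩ := exists_nat_one_div_lt (div_pos hε (by linarith : (0:ℝ) < M+1))
    set m : ℕ := ⌈(x:ℝ)⌉₊ + 1 with hmdef
    have hxm : (x:ℝ) + 1 ≤ (m:ℝ) := by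
      have := Nat.le_ceil (x:ℝ)
      rw [hmdef]; push_cast; linarith
    refine ⟨min ((δ m j : ℝ≥0):ℝ) 1,
      lt_min (by exact_mod_cast hδpos m j) one_pos, ?_⟩
    intro F hF y hy
    have hyx : (y:ℝ) ≤ (x:ℝ) + 1 := by
      have h1 : (y:ℝ) - x ≤ |(y:ℝ) - x| := le_abs_self _
      have hd : |(y:ℝ) - x| < 1 := lt_of_lt_of_le hy (min_le_right _ _)
      linarith
    have hym : y ≤ (m:ℝ≥0) := by
      have h' : (y:ℝ) ≤ (m:ℝ) := by linarith
      exact_mod_cast h'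
    have hxm' : x ≤ (m:ℝ≥0) := by
      have h' : (x:ℝ) ≤ (m:ℝ) := by linarith
      exact_mod_cast h'
    have hMj : ‖F y - F x‖ ≤ M/((j:ℝ)+1) :=
      hF.2 m j y x hym hxm' (le_of_lt (lt_of_lt_of_le hy (min_le_left _ _)))
    have hMj2 : M/((j:ℝ)+1) < ε := by
      have h2 : (M+1) * (1/((j:ℝ)+1)) < (M+1) * (ε/(M+1)) :=
        mul_lt_mul_of_pos_left hj (by linarith)
      have h3 : (M+1) * (ε/(M+1)) = ε := by field_simp
      have h1 : M/((j:ℝ)+1) ≤ (M+1) * (1/((j:ℝ)+1)) := by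
        rw [mul_one_div]
        gcongr
        linarith
      linarith
    linarith
  -- elements of A are continuous
  have hcont : ∀ F ∈ A, Continuous F := by
    intro F hF
    rw [Metric.continuous_iff]
    intro x ε hε
    obtain ⟨δ', hδ', h⟩ := hest x ε hε
    exact ⟨δ', hδ', fun y hy => by rw [dist_eq_norm]; exact h F hF y hy⟩
  have himg : ContinuousMap.toFun '' KX = A := by
    ext F
    constructor
    · rintro ⟨f, hf, rfl⟩; exact hf
    · intro hF; exact ⟨⟨F, hcont F hF⟩, hF, rfl⟩
  -- A is closed
  have hAclosed : IsClosed A := by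
    have hAeq : A = {F : ℝ≥0 → EuclideanSpace ℝ (Fin d) | ‖F 0‖ ≤ M} ∩
        ⋂ (m : ℕ) (j : ℕ) (u : ℝ≥0) (v : ℝ≥0),
          {F : ℝ≥0 → EuclideanSpace ℝ (Fin d) |
            (u ≤ (m:ℝ≥0) ∧ v ≤ (m:ℝ≥0) ∧ dist u v ≤ ((δ m j : ℝ≥0):ℝ)) →
              ‖F u - F v‖ ≤ M/((j:ℝ)+1)} := by
      ext F
      simp only [hAdef, mem_setOf_eq, mem_inter_iff, mem_iInter, and_imp]
    rw [hAeq]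
    refine IsClosed.inter ?_ (isClosed_iInter fun m => isClosed_iInter fun j =>
      isClosed_iInter fun u => isClosed_iInter fun v => ?_)
    · exact isClosed_le ((continuous_apply (0:ℝ≥0)).norm) continuous_const
    · by_cases hc : u ≤ (m:ℝ≥0) ∧ v ≤ (m:ℝ≥0) ∧ dist u v ≤ ((δ m j : ℝ≥0):ℝ)
      · have : {F : ℝ≥0 → EuclideanSpace ℝ (Fin d) |
            (u ≤ (m:ℝ≥0) ∧ v ≤ (m:ℝ≥0) ∧ dist u v ≤ ((δ m j : ℝ≥0):ℝ)) →
              ‖F u - F v‖ ≤ M/((j:ℝ)+1)} =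
            {F : ℝ≥0 → EuclideanSpace ℝ (Fin d) | ‖F u - F v‖ ≤ M/((j:ℝ)+1)} := by
          ext F; simp [hc]
        rw [this]
        exact isClosed_le (((continuous_apply u).sub (continuous_apply v)).norm)
          continuous_const
      · have : {F : ℝ≥0 → EuclideanSpace ℝ (Fin d) |
            (u ≤ (m:ℝ≥0) ∧ v ≤ (m:ℝ≥0) ∧ dist u v ≤ ((δ m j : ℝ≥0):ℝ)) →
              ‖F u - F v‖ ≤ M/((j:ℝ)+1)} = univ := by
          ext F; simp only [mem_setOf_eq, mem_univ, iff_true]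
          exact fun h => absurd h hc
        rw [this]; exact isClosed_univ
  -- A is pointwise bounded
  have hApi : A ⊆ univ.pi (fun x : ℝ≥0 => Metric.closedBall (0 : EuclideanSpace ℝ (Fin d))
      (M + (⌈(x:ℝ)/((δ ⌈(x:ℝ)⌉₊ 0 : ℝ≥0):ℝ)⌉₊ : ℝ) * M)) := by
    intro F hF
    intro x _
    rw [Metric.mem_closedBall, dist_zero_right]
    set m : ℕ := ⌈(x:ℝ)⌉₊ with hmdef
    set N : ℕ := ⌈(x:ℝ)/((δ m 0 : ℝ≥0):ℝ)⌉₊ with hNdef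
    have hxm : x ≤ (m : ℝ≥0) := by
      rw [← NNReal.coe_le_coe]; push_cast; exact Nat.le_ceil _
    have hδ0 : (0:ℝ) < ((δ m 0:ℝ≥0):ℝ) := by exact_mod_cast hδpos m 0
    have hxN : x ≤ (N : ℝ≥0) * (δ m 0) := by
      rw [← NNReal.coe_le_coe]; push_cast
      have hle := Nat.le_ceil ((x:ℝ)/((δ m 0:ℝ≥0):ℝ))
      calc (x:ℝ) = ((x:ℝ)/((δ m 0:ℝ≥0):ℝ)) * ((δ m 0:ℝ≥0):ℝ) := by field_simp
      _ ≤ (N:ℝ) * ((δ m 0:ℝ≥0):ℝ) := mul_le_mul_of_nonneg_right hle hδ0.le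
    have hchain := chain_bound F (m:ℝ≥0) (δ m 0) (M/(((0:ℕ):ℝ)+1))
      (fun u v hu hv hd => hF.2 m 0 u v hu hv hd) N x hxm hxN
    have hM0 : M/(((0:ℕ):ℝ)+1) = M := by norm_num
    rw [hM0] at hchain
    calc ‖F x‖ = ‖F 0 + (F x - F 0)‖ := by congr 1; abel
    _ ≤ ‖F 0‖ + ‖F x - F 0‖ := norm_add_le _ _
    _ ≤ M + (N:ℝ) * M := add_le_add hF.1 hchain
  have hAcompact : IsCompact A :=
    IsCompact.of_isClosed_subset
      (isCompact_univ_pi fun x => isCompact_closedBall _ _) hAclosed hApi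
  -- equicontinuity of KX
  have hequi : Equicontinuous ((↑) : KX → ℝ≥0 → EuclideanSpace ℝ (Fin d)) := by
    intro x
    rw [Metric.equicontinuousAt_iff]
    intro ε hε
    obtain ⟨δ', hδ', h⟩ := hest x ε hε
    refine ⟨δ', hδ', fun y hy f => ?_⟩
    rw [dist_eq_norm, norm_sub_rev]
    exact h _ f.2 y hy
  have hKXc : IsCompact KX :=
    ArzelaAscoli.isCompact_of_equicontinuous KX (by rw [himg]; exact hAcompact) hequi
  refine ⟨KX, hKXc, ?_⟩
  intro n hn
  set Q : Ω → Prop := fun ω => ‖X n ω 0‖ ≤ G (Y n ω) ∧ ∀ m j : ℕ, 0 < m →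
      modC (X n ω) (δ m j) (m:ℝ≥0) ≤ G (Y n ω) * g (modC (Y n ω) (δ m j) (m:ℝ≥0))
    with hQdef
  have hQ : ∀ᵐ ω ∂P, Q ω := by
    refine (h0 n hn).and ?_
    rw [ae_all_iff]; intro m
    rw [ae_all_iff]; intro j
    by_cases hm0 : 0 < m
    · filter_upwards [hm (δ m j) (m:ℝ≥0) (hδpos m j) (by exact_mod_cast hm0) n hn] with ω hω
      exact fun _ => hω
    · filter_upwards with ω
      exact fun h => absurd h hm0
  have hsub : {ω | X n ω ∉ KX} ⊆ {ω | Y n ω ∉ KY} ∪ {ω | ¬ Q ω} := by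
    intro ω hω
    simp only [mem_union, mem_setOf_eq]
    by_contra hc
    simp only [not_or, not_not] at hc
    obtain ⟨hYK, hQω⟩ := hc
    apply hω
    refine ⟨hQω.1.trans (hGM _ hYK), ?_⟩
    intro m j u v hu hv hd
    rcases Nat.eq_zero_or_pos m with hm0 | hm0
    · subst hm0
      have hu0 : u = 0 := by
        rw [← le_zero_iff]; exact_mod_cast hu
      have hv0 : v = 0 := by
        rw [← le_zero_iff]; exact_mod_cast hv
      subst hu0; subst hv0
      simp only [sub_self, norm_zero]
      positivity
    · have h1 : ‖X n ω u - X n ω v‖ ≤ modC (X n ω) (δ m j) (m:ℝ≥0) :=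
        le_modC _ hu hv hd
      have h2 := hQω.2 m j hm0
      have h3 : g (modC (Y n ω) (δ m j) (m:ℝ≥0)) ≤ 1/((j:ℝ)+1) := hδg m j _ hYK
      have h4 : G (Y n ω) * g (modC (Y n ω) (δ m j) (m:ℝ≥0)) ≤ M * (1/((j:ℝ)+1)) :=
        mul_le_mul (hGM _ hYK) h3 (hgnn _ (modC_nonneg _ _ _)) hMnn
      calc ‖X n ω u - X n ω v‖ ≤ modC (X n ω) (δ m j) (m:ℝ≥0) := h1
      _ ≤ G (Y n ω) * g (modC (Y n ω) (δ m j) (m:ℝ≥0)) := h2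
      _ ≤ M * (1/((j:ℝ)+1)) := h4
      _ = M/((j:ℝ)+1) := by rw [mul_one_div]
  calc P {ω | X n ω ∉ KX} ≤ P ({ω | Y n ω ∉ KY} ∪ {ω | ¬ Q ω}) := measure_mono hsub
  _ ≤ P {ω | Y n ω ∉ KY} + P {ω | ¬ Q ω} := measure_union_le _ _
  _ ≤ η + 0 := add_le_add (hKYm n hn) (le_of_eq (ae_iff.mp hQ))
  _ = η := add_zero _
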